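/- Let ℒ ⊂ ℝ^d be a lattice of rank n ≥ 2, let w ∈ ℒ* be a nonzero primitive dual vector with ‖w‖ ≤ γ₂ · det(ℒ*)^{1/n} for some real γ₂ > 0, and let y be a nonzero vector of the rank-(n−1) lattice ℒ ∩ w^⊥ with ‖y‖ ≤ γ₁ · det(ℒ ∩ w^⊥)^{1/(n−1)} for some real γ₁ > 0. Then ‖y‖ ≤ γ₁ · γ₂^{1/(n−1)} · det(ℒ)^{1/n}. -/

import Mathlib

open scoped RealInnerProductSpace BigOperators

noncomputable section

/-- The set of integer linear combinations of `B 0, …, B (n-1)`. -/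
def zspan {d n : ℕ} (B : Fin n → EuclideanSpace ℝ (Fin d)) : Set (EuclideanSpace ℝ (Fin d)) :=
  {x | ∃ c : Fin n → ℤ, x = ∑ i, (c i : ℝ) • B i}

/-- `L` is a lattice of rank `n`: the ℤ-span of `n` ℝ-linearly independent vectors. -/
def IsLattice {d : ℕ} (L : Set (EuclideanSpace ℝ (Fin d))) (n : ℕ) : Prop :=
  ∃ B : Fin n → EuclideanSpace ℝ (Fin d), LinearIndependent ℝ B ∧ L = zspan B

/-- The dual set `S* := {w ∈ span_ℝ S : ⟨w,y⟩ ∈ ℤ for all y ∈ S}`. -/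
def dualSet {d : ℕ} (S : Set (EuclideanSpace ℝ (Fin d))) : Set (EuclideanSpace ℝ (Fin d)) :=
  {w | w ∈ Submodule.span ℝ S ∧ ∀ y ∈ S, ∃ m : ℤ, ⟪w, y⟫ = (m : ℝ)}

/-- Orthogonal projection onto the orthogonal complement of `span_ℝ S`. -/
def projPerp {d : ℕ} (S : Set (EuclideanSpace ℝ (Fin d))) (x : EuclideanSpace ℝ (Fin d)) : EuclideanSpace ℝ (Fin d) :=
  (Submodule.orthogonalProjectionOnto (Submodule.span ℝ S)ᗮ x : EuclideanSpace ℝ (Fin d))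

/-- `det(ℒ) = √(det(BᵀB))`, computed from a basis `B` via its Gram matrix. -/
def gramDet {d n : ℕ} (B : Fin n → EuclideanSpace ℝ (Fin d)) : ℝ :=
  Real.sqrt (Matrix.det (Matrix.of fun i j => ⟪B i, B j⟫))

/-- The Gram–Schmidt orthogonalization `b̃ᵢ = Π_{{b₁,…,b_(i-1)}^⊥}(bᵢ)`. -/
def gsVec {d n : ℕ} (B : Fin n → EuclideanSpace ℝ (Fin d)) (i : Fin n) : EuclideanSpace ℝ (Fin d) :=
  projPerp (B '' {j | j < i}) (B i)

/-- The Gram–Schmidt coefficients `μ_(i,j) = ⟨b̃ᵢ, bⱼ⟩ / ‖b̃ᵢ‖²`. -/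
def mu {d n : ℕ} (B : Fin n → EuclideanSpace ℝ (Fin d)) (i j : Fin n) : ℝ :=
  ⟪gsVec B i, B j⟫ / ‖gsVec B i‖ ^ 2

/-- `B` is an LLL-reduced basis (with parameter δ = 3/4). -/
def IsLLLReduced {d n : ℕ} (B : Fin n → EuclideanSpace ℝ (Fin d)) : Prop :=
  LinearIndependent ℝ B ∧
  (∀ i j : Fin n, i < j → |mu B i j| ≤ 1 / 2) ∧
  (∀ (i : ℕ) (h : i + 1 < n),
    (3 / 4) * ‖gsVec B ⟨i, Nat.lt_of_succ_lt h⟩‖ ^ 2 ≤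
      ‖gsVec B ⟨i + 1, h⟩‖ ^ 2 +
        (mu B ⟨i, Nat.lt_of_succ_lt h⟩ ⟨i + 1, h⟩) ^ 2 * ‖gsVec B ⟨i, Nat.lt_of_succ_lt h⟩‖ ^ 2)



namespace St6

variable {d : ℕ}

abbrev E (d : ℕ) := EuclideanSpace ℝ (Fin d)

def gram {n : ℕ} (B : Fin n → E d) : Matrix (Fin n) (Fin n) ℝ :=
  Matrix.of fun i j => ⟪B i, B j⟫

lemma gram_transform {n m : ℕ} (B : Fin n → E d) (U : Matrix (Fin n) (Fin m) ℝ) :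
    gram (fun k => ∑ j, U j k • B j) = U.transpose * gram B * U := by
  ext i k
  simp only [gram, Matrix.of_apply, Matrix.mul_apply, Matrix.transpose_apply,
    sum_inner, inner_sum, real_inner_smul_left, real_inner_smul_right,
    Finset.sum_mul, Finset.mul_sum]
  refine Finset.sum_congr rfl fun a _ => Finset.sum_congr rfl fun b _ => ?_
  rw [real_inner_comm]
  ring

lemma gram_posDef {n : ℕ} {B : Fin n → E d} (hB : LinearIndependent ℝ B) :
    (gram B).PosDef := by
  refine Matrix.posDef_iff_dotProduct_mulVec.mpr ⟨?_, ?_⟩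
  · ext i j
    simp only [gram, Matrix.conjTranspose_apply, Matrix.of_apply, star_trivial]
    exact real_inner_comm _ _
  · intro x hx
    have hv : (∑ i, x i • B i) ≠ 0 := by
      intro h
      exact hx (funext fun i => Fintype.linearIndependent_iff.mp hB x h i)
    have key : dotProduct (star x) ((gram B).mulVec x)
        = ⟪∑ i, x i • B i, ∑ j, x j • B j⟫ := by
      simp only [dotProduct, Matrix.mulVec, gram, Matrix.of_apply,
        sum_inner, inner_sum, real_inner_smul_left, real_inner_smul_right, Pi.star_apply,
        star_trivial, Finset.mul_sum]
      refine Finset.sum_congr rfl fun i _ => Finset.sum_congr rfl fun j _ => ?_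
      rw [real_inner_comm]
      ring
    rw [key]
    rcases (real_inner_self_nonneg (x := ∑ i, x i • B i)).lt_or_eq with h | h
    · exact h
    · exact absurd (inner_self_eq_zero.mp h.symm) hv

lemma gram_det_pos {n : ℕ} {B : Fin n → E d} (hB : LinearIndependent ℝ B) :
    0 < (gram B).det := (gram_posDef hB).det_pos

end St6
namespace St6

variable {d : ℕ}

lemma self_mem_zspan {n : ℕ} (B : Fin n → E d) (i : Fin n) : B i ∈ zspan B := by
  refine ⟨fun j => if j = i then 1 else 0, ?_⟩
  simp [Finset.sum_ite_eq', eq_comm]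

lemma zspan_subset_of_mem {m n : ℕ} {A : Fin m → E d} {B : Fin n → E d}
    (h : ∀ i, A i ∈ zspan B) : zspan A ⊆ zspan B := by
  choose U hU using h
  rintro x ⟨c, rfl⟩
  refine ⟨fun j => ∑ i, U i j * c i, ?_⟩
  simp only [hU, Finset.smul_sum]
  rw [Finset.sum_comm]
  refine Finset.sum_congr rfl fun j _ => ?_
  push_cast
  rw [Finset.sum_smul]
  refine Finset.sum_congr rfl fun i _ => ?_
  rw [smul_smul, mul_comm]

lemma sub_zsmul_mem_zspan {n : ℕ} {B : Fin n → E d} {x u : E d} (m : ℤ)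
    (hx : x ∈ zspan B) (hu : u ∈ zspan B) : x - (m : ℝ) • u ∈ zspan B := by
  obtain ⟨c, rfl⟩ := hx
  obtain ⟨e, rfl⟩ := hu
  refine ⟨fun i => c i - m * e i, ?_⟩
  rw [Finset.smul_sum, ← Finset.sum_sub_distrib]
  refine Finset.sum_congr rfl fun i _ => ?_
  push_cast
  rw [sub_smul, smul_smul]

lemma span_zspan {n : ℕ} (B : Fin n → E d) :
    Submodule.span ℝ (zspan B) = Submodule.span ℝ (Set.range B) := by
  apply le_antisymm
  · rw [Submodule.span_le]
    rintro x ⟨c, rfl⟩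
    exact Submodule.sum_mem _ fun i _ =>
      Submodule.smul_mem _ _ (Submodule.subset_span ⟨i, rfl⟩)
  · rw [Submodule.span_le]
    rintro x ⟨i, rfl⟩
    exact Submodule.subset_span (self_mem_zspan B i)

lemma coord_unique {n : ℕ} {B : Fin n → E d} (hB : LinearIndependent ℝ B)
    {f g : Fin n → ℝ} (h : ∑ i, f i • B i = ∑ i, g i • B i) : f = g := by
  have h2 : ∑ i, (f i - g i) • B i = 0 := by
    simp only [sub_smul, Finset.sum_sub_distrib, h, sub_self]
  funext i
  have := Fintype.linearIndependent_iff.mp hB _ h2 i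
  linarith

end St6
namespace St6

variable {d : ℕ}

lemma sum_coord_eq_self {n : ℕ} (B : Fin n → E d) (i : Fin n) :
    B i = ∑ j, (if j = i then (1:ℝ) else 0) • B j := by
  simp [Finset.sum_ite_eq', eq_comm]

lemma det_gram_eq_of_zspan_eq {n : ℕ} {B B' : Fin n → E d}
    (hB : LinearIndependent ℝ B) (h : zspan B = zspan B') :
    (gram B).det = (gram B').det := by
  have h1 : ∀ i, B' i ∈ zspan B := fun i => h ▸ self_mem_zspan B' i
  have h2 : ∀ i, B i ∈ zspan B' := fun i => h.symm ▸ self_mem_zspan B i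
  choose U hU using h1
  choose V hV using h2
  set Ur : Matrix (Fin n) (Fin n) ℝ := Matrix.of (fun j k => ((U k j : ℤ) : ℝ)) with hUr
  set Vr : Matrix (Fin n) (Fin n) ℝ := Matrix.of (fun j k => ((V k j : ℤ) : ℝ)) with hVr
  have hB' : B' = fun k => ∑ j, Ur j k • B j := by
    funext k; exact hU k
  have hBV : ∀ i, B i = ∑ k, Vr k i • B' k := fun i => hV i
  have hcomp : ∀ i, B i = ∑ j, (Ur * Vr) j i • B j := by
    intro i
    rw [hBV i]
    simp only [hB', Finset.smul_sum]
    rw [Finset.sum_comm]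
    refine Finset.sum_congr rfl fun j _ => ?_
    rw [Matrix.mul_apply, Finset.sum_smul]
    refine Finset.sum_congr rfl fun k _ => ?_
    rw [smul_smul, mul_comm]
  have hUV : Ur * Vr = 1 := by
    ext j i
    have := coord_unique hB (f := fun j => (Ur * Vr) j i)
      (g := fun j => if j = i then (1:ℝ) else 0) ?_
    · have := congrFun this j
      simp only [Matrix.one_apply, this]
    · rw [← sum_coord_eq_self, ← hcomp i]
  -- Ur has integer entries; get det Ur = ±1
  have hUdet : Ur.det = (((Matrix.of (fun j k => U k j)).det : ℤ) : ℝ) := by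
    exact (RingHom.map_det (Int.castRingHom ℝ) _).symm
  have hVdet : Vr.det = (((Matrix.of (fun j k => V k j)).det : ℤ) : ℝ) :=
    (RingHom.map_det (Int.castRingHom ℝ) _).symm
  have hmul : ((Matrix.of (fun j k => U k j)).det : ℤ) * ((Matrix.of (fun j k => V k j)).det : ℤ) = 1 := by
    have := congrArg Matrix.det hUV
    rw [Matrix.det_mul, Matrix.det_one, hUdet, hVdet] at this
    exact_mod_cast this
  have hsq : Ur.det ^ 2 = 1 := by
    have hunit : IsUnit ((Matrix.of (fun j k => U k j)).det : ℤ) := IsUnit.of_mul_eq_one _ hmul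
    rcases Int.isUnit_iff.mp hunit with h' | h' <;> rw [hUdet, h'] <;> norm_num
  have hgram : gram B' = Ur.transpose * gram B * Ur := by
    rw [hB']
    exact gram_transform B Ur
  rw [hgram, Matrix.det_mul, Matrix.det_mul, Matrix.det_transpose]
  linear_combination (-(gram B).det) * hsq

end St6
namespace St6

variable {d : ℕ}

lemma eq_of_inner_eq {n : ℕ} {B : Fin n → E d} {v v' : E d}
    (hv : v ∈ Submodule.span ℝ (Set.range B)) (hv' : v' ∈ Submodule.span ℝ (Set.range B))
    (h : ∀ j, ⟪v, B j⟫ = ⟪v', B j⟫) : v = v' := by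
  have hsub : v - v' ∈ Submodule.span ℝ (Set.range B) := Submodule.sub_mem _ hv hv'
  obtain ⟨r, hr⟩ := (Submodule.mem_span_range_iff_exists_fun ℝ).mp hsub
  have hz : ⟪v - v', v - v'⟫ = 0 := by
    have h0 : ⟪v - v', ∑ i, r i • B i⟫ = 0 := by
      rw [inner_sum]
      simp only [real_inner_smul_right]
      refine Finset.sum_eq_zero fun j _ => ?_
      rw [inner_sub_left, h j, sub_self, mul_zero]
    rw [hr] at h0
    exact h0
  exact sub_eq_zero.mp (inner_self_eq_zero.mp hz)

def dualBasis {n : ℕ} (B : Fin n → E d) : Fin n → E d :=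
  fun k => ∑ i, (gram B)⁻¹ i k • B i

lemma gram_symm {n : ℕ} (B : Fin n → E d) : (gram B).transpose = gram B := by
  ext i j
  simp only [gram, Matrix.transpose_apply, Matrix.of_apply]
  exact real_inner_comm _ _

lemma gram_inv_symm {n : ℕ} (B : Fin n → E d) : ∀ i k, (gram B)⁻¹ i k = (gram B)⁻¹ k i := by
  intro i k
  have : ((gram B)⁻¹).transpose = (gram B)⁻¹ := by
    rw [Matrix.transpose_nonsing_inv, gram_symm]
  have h2 := congrFun (congrFun this k) i
  simpa [Matrix.transpose_apply] using h2

lemma dualBasis_inner {n : ℕ} {B : Fin n → E d} (hB : LinearIndependent ℝ B) (k j : Fin n) :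
    ⟪dualBasis B k, B j⟫ = (1 : Matrix (Fin n) (Fin n) ℝ) k j := by
  have hdet : IsUnit (gram B).det := (gram_det_pos hB).ne'.isUnit
  rw [show (1 : Matrix (Fin n) (Fin n) ℝ) = (gram B)⁻¹ * gram B from (Matrix.nonsing_inv_mul _ hdet).symm]
  rw [dualBasis, sum_inner, Matrix.mul_apply]
  refine Finset.sum_congr rfl fun i _ => ?_
  rw [real_inner_smul_left, gram_inv_symm B i k]
  rfl

lemma dualBasis_linearIndependent {n : ℕ} {B : Fin n → E d} (hB : LinearIndependent ℝ B) :
    LinearIndependent ℝ (dualBasis B) := by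
  rw [Fintype.linearIndependent_iff]
  intro c hc j
  have : ⟪∑ k, c k • dualBasis B k, B j⟫ = c j := by
    rw [sum_inner]
    simp only [real_inner_smul_left, dualBasis_inner hB]
    simp [Matrix.one_apply]
  rw [hc] at this
  simpa using this.symm

lemma dualBasis_mem_span {n : ℕ} (B : Fin n → E d) (k : Fin n) :
    dualBasis B k ∈ Submodule.span ℝ (Set.range B) :=
  Submodule.sum_mem _ fun i _ => Submodule.smul_mem _ _ (Submodule.subset_span ⟨i, rfl⟩)

lemma gram_dualBasis {n : ℕ} {B : Fin n → E d} (hB : LinearIndependent ℝ B) :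
    gram (dualBasis B) = (gram B)⁻¹ := by
  have hdet : IsUnit (gram B).det := (gram_det_pos hB).ne'.isUnit
  have : gram (dualBasis B) = ((gram B)⁻¹).transpose * gram B * (gram B)⁻¹ :=
    gram_transform B (gram B)⁻¹
  rw [this, Matrix.transpose_nonsing_inv, gram_symm, Matrix.nonsing_inv_mul _ hdet, Matrix.one_mul]

lemma det_gram_dualBasis {n : ℕ} {B : Fin n → E d} (hB : LinearIndependent ℝ B) :
    (gram (dualBasis B)).det = ((gram B).det)⁻¹ := by
  rw [gram_dualBasis hB, Matrix.det_nonsing_inv, Ring.inverse_eq_inv']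

lemma dualSet_zspan {n : ℕ} {B : Fin n → E d} (hB : LinearIndependent ℝ B) :
    dualSet (zspan B) = zspan (dualBasis B) := by
  ext x
  constructor
  · rintro ⟨hx1, hx2⟩
    rw [span_zspan] at hx1
    have hm : ∀ j, ∃ m : ℤ, ⟪x, B j⟫ = (m : ℝ) := fun j => hx2 _ (self_mem_zspan B j)
    choose m hmv using hm
    refine ⟨m, ?_⟩
    refine eq_of_inner_eq hx1 ?_ ?_
    · exact Submodule.sum_mem _ fun k _ => Submodule.smul_mem _ _ (dualBasis_mem_span B k)
    · intro j
      rw [sum_inner]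
      simp only [real_inner_smul_left, dualBasis_inner hB]
      rw [hmv j]
      simp [Matrix.one_apply]
  · rintro ⟨c, rfl⟩
    constructor
    · rw [span_zspan]
      exact Submodule.sum_mem _ fun k _ => Submodule.smul_mem _ _ (dualBasis_mem_span B k)
    · rintro y ⟨e, rfl⟩
      refine ⟨∑ k, c k * e k, ?_⟩
      rw [sum_inner]
      push_cast
      refine Finset.sum_congr rfl fun k _ => ?_
      rw [real_inner_smul_left, inner_sum]
      simp only [real_inner_smul_right, dualBasis_inner hB, Matrix.one_apply]
      simp [mul_ite, Finset.sum_ite_eq]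

end St6
namespace St6

variable {d : ℕ}

lemma inner_zspan_sum {n : ℕ} {B : Fin n → E d} {w : E d} {m : Fin n → ℤ}
    (hm : ∀ i, ⟪w, B i⟫ = (m i : ℝ)) (e : Fin n → ℤ) :
    ⟪w, ∑ i, (e i : ℝ) • B i⟫ = ∑ i, (e i : ℝ) * (m i : ℝ) := by
  rw [inner_sum]
  refine Finset.sum_congr rfl fun i _ => ?_
  rw [real_inner_smul_right, hm i]

lemma exists_unit_inner {n : ℕ} {B : Fin n → E d} (hB : LinearIndependent ℝ B)
    {w : E d} (hw0 : w ≠ 0) (hwdual : w ∈ dualSet (zspan B))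
    (hwprim : {x | ∃ z : ℤ, x = (z : ℝ) • w} =
      dualSet (zspan B) ∩ (Submodule.span ℝ ({w} : Set (E d)) : Set (E d))) :
    ∃ u ∈ zspan B, ⟪w, u⟫ = 1 := by
  obtain ⟨hwspan, hwint⟩ := hwdual
  rw [span_zspan] at hwspan
  have hm : ∀ i, ∃ m : ℤ, ⟪w, B i⟫ = (m : ℝ) := fun i => hwint _ (self_mem_zspan B i)
  choose m hmv using hm
  -- the ideal generated by the m i
  obtain ⟨g, hg⟩ := Submodule.IsPrincipal.principal (Ideal.span (Set.range m))
  have hgmem : g ∈ Ideal.span (Set.range m) := by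
    rw [hg]; exact Ideal.subset_span rfl
  have hgrep : ∃ c : Fin n → ℤ, ∑ i, c i • m i = g := by
    rw [Ideal.span] at hgmem
    exact (Submodule.mem_span_range_iff_exists_fun ℤ).mp hgmem
  obtain ⟨c, hc⟩ := hgrep
  have hdvd : ∀ i, g ∣ m i := by
    intro i
    have : m i ∈ Ideal.span (Set.range m) := Ideal.subset_span ⟨i, rfl⟩
    rw [hg] at this
    exact Ideal.mem_span_singleton.mp this
  choose k hk using hdvd
  -- some m i nonzero
  have hmne : ∃ i, m i ≠ 0 := by
    by_contra hall
    push_neg at hall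
    apply hw0
    refine eq_of_inner_eq hwspan (Submodule.zero_mem _) fun j => ?_
    rw [hmv j, hall j, inner_zero_left]
    simp
  have hgne : g ≠ 0 := by
    rintro rfl
    obtain ⟨i, hi⟩ := hmne
    exact hi (by simpa using hk i)
  have hgR : ((g : ℤ) : ℝ) ≠ 0 := Int.cast_ne_zero.mpr hgne
  -- w' = g⁻¹ • w is in the dual and in span{w}
  have hw' : ((g : ℝ))⁻¹ • w ∈ dualSet (zspan B) := by
    constructor
    · rw [span_zspan]
      exact Submodule.smul_mem _ _ hwspan
    · rintro y ⟨e, rfl⟩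
      refine ⟨∑ i, e i * k i, ?_⟩
      rw [real_inner_smul_left, inner_zspan_sum hmv]
      have : ∑ i, (e i : ℝ) * (m i : ℝ) = (g : ℝ) * ∑ i, (e i : ℝ) * (k i : ℝ) := by
        rw [Finset.mul_sum]
        refine Finset.sum_congr rfl fun i _ => ?_
        rw [hk i]
        push_cast
        ring
      rw [this, inv_mul_cancel_left₀ hgR]
      push_cast
      rfl
  have hw'mem : ((g : ℝ))⁻¹ • w ∈ {x | ∃ z : ℤ, x = (z : ℝ) • w} := by
    rw [hwprim]
    exact ⟨hw', Submodule.mem_span_singleton.mpr ⟨(g : ℝ)⁻¹, rfl⟩⟩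
  obtain ⟨z, hz⟩ := hw'mem
  have hzg : ((g : ℝ))⁻¹ = (z : ℝ) := by
    have : (((g : ℝ))⁻¹ - (z : ℝ)) • w = 0 := by
      rw [sub_smul, hz]
      simp
    rcases smul_eq_zero.mp this with h | h
    · linarith [sub_eq_zero.mp (by linarith [h] : ((g:ℝ))⁻¹ - (z:ℝ) = 0)]
    · exact absurd h hw0
  have hgz : g * z = 1 := by
    have : (g : ℝ) * (z : ℝ) = 1 := by
      rw [← hzg, mul_inv_cancel₀ hgR]
    exact_mod_cast this
  have hg1 : g = 1 ∨ g = -1 := Int.isUnit_iff.mp (IsUnit.of_mul_eq_one _ hgz)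
  have hgsq : (g : ℝ) * (g : ℝ) = 1 := by
    rcases hg1 with h | h <;> rw [h] <;> norm_num
  refine ⟨∑ i, ((g * c i : ℤ) : ℝ) • B i, ⟨fun i => g * c i, rfl⟩, ?_⟩
  rw [inner_zspan_sum hmv]
  have : ∑ i, ((g * c i : ℤ) : ℝ) * (m i : ℝ) = (g : ℝ) * (g : ℝ) := by
    simp only [smul_eq_mul] at hc
    have hcR : ((∑ i, c i * m i : ℤ) : ℝ) = (g : ℝ) := by exact_mod_cast hc
    push_cast at hcR ⊢
    rw [← hcR, Finset.mul_sum]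
    refine Finset.sum_congr rfl fun i _ => ?_
    ring
  rw [this, hgsq]

end St6
namespace St6

variable {d : ℕ}

lemma zspan_comp_equiv {n m : ℕ} (B : Fin n → E d) (e : Fin m ≃ Fin n) :
    zspan (B ∘ e) = zspan B := by
  ext x
  constructor
  · rintro ⟨c, rfl⟩
    refine ⟨c ∘ e.symm, ?_⟩
    simpa using Equiv.sum_comp e (fun i => ((c (e.symm i) : ℝ)) • B i)
  · rintro ⟨c, rfl⟩
    refine ⟨c ∘ e, ?_⟩
    simpa using (Equiv.sum_comp e (fun i => ((c i : ℝ)) • B i)).symm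

lemma det_gram_comp_equiv {n m : ℕ} (B : Fin n → E d) (e : Fin m ≃ Fin n) :
    (gram (B ∘ e)).det = (gram B).det := by
  have : gram (B ∘ e) = (gram B).submatrix e e := by
    ext i j; rfl
  rw [this, Matrix.det_submatrix_equiv_self]

lemma snoc_linearIndependent {m : ℕ} {C : Fin m → E d} {u w : E d}
    (hC : LinearIndependent ℝ C) (hCw : ∀ i, ⟪w, C i⟫ = 0) (huw : ⟪w, u⟫ = 1) :
    LinearIndependent ℝ (Fin.snoc C u) := by
  rw [Fintype.linearIndependent_iff]
  intro g hg
  have hsum : (∑ i : Fin m, g i.castSucc • C i) + g (Fin.last m) • u = 0 := by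
    rw [← hg, Fin.sum_univ_castSucc]
    simp [Fin.snoc_castSucc, Fin.snoc_last]
  have hlast : g (Fin.last m) = 0 := by
    have h0 : ⟪w, (∑ i : Fin m, g i.castSucc • C i) + g (Fin.last m) • u⟫ = 0 := by
      rw [hsum, inner_zero_right]
    rw [inner_add_right, inner_sum, real_inner_smul_right, huw] at h0
    simp only [real_inner_smul_right, hCw, mul_zero, Finset.sum_const_zero, zero_add,
      mul_one] at h0
    exact h0
  have hC0 : ∀ i : Fin m, g i.castSucc = 0 := by
    rw [hlast, zero_smul, add_zero] at hsum
    exact fun i => Fintype.linearIndependent_iff.mp hC _ hsum i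
  intro j
  rcases eq_or_ne j (Fin.last m) with rfl | hj
  · exact hlast
  · obtain ⟨i, rfl⟩ := Fin.exists_castSucc_eq.mpr hj
    exact hC0 i

lemma det_gram_snoc {m : ℕ} (C : Fin m → E d) (u q : E d) (t : Fin m → ℝ)
    (hq : ∀ i, ⟪q, C i⟫ = 0) (hu : u = (∑ i, t i • C i) + q) :
    (gram (Fin.snoc C u)).det = (gram C).det * ‖q‖ ^ 2 := by
  set tt : Fin (m + 1) → ℝ := Fin.snoc t 0 with htt
  set Em : Matrix (Fin (m + 1)) (Fin (m + 1)) ℝ :=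
    Matrix.of (fun j k => (if j = k then (1:ℝ) else 0) + (if k = Fin.last m then tt j else 0))
    with hEm
  have hrepr : (Fin.snoc C u : Fin (m+1) → E d) =
      fun k => ∑ j, Em j k • (Fin.snoc C q : Fin (m+1) → E d) j := by
    funext k
    have hsplit : ∑ j, Em j k • (Fin.snoc C q : Fin (m+1) → E d) j =
        (∑ j, (if j = k then (1:ℝ) else 0) • (Fin.snoc C q : Fin (m+1) → E d) j) +
        (∑ j, (if k = Fin.last m then tt j else 0) • (Fin.snoc C q : Fin (m+1) → E d) j) := by
      rw [← Finset.sum_add_distrib]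
      refine Finset.sum_congr rfl fun j _ => ?_
      rw [← add_smul]
      rfl
    rw [hsplit]
    have h1 : ∑ j, (if j = k then (1:ℝ) else 0) • (Fin.snoc C q : Fin (m+1) → E d) j =
        (Fin.snoc C q : Fin (m+1) → E d) k := by
      simp [ite_smul, Finset.sum_ite_eq']
    rw [h1]
    rcases eq_or_ne k (Fin.last m) with rfl | hk
    · have h2 : ∑ j, (if (Fin.last m) = Fin.last m then tt j else 0) •
          (Fin.snoc C q : Fin (m+1) → E d) j = (∑ i : Fin m, t i • C i) := by
        simp only [if_pos rfl]
        rw [Fin.sum_univ_castSucc]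
        simp [htt, Fin.snoc_castSucc, Fin.snoc_last]
      rw [h2, Fin.snoc_last, Fin.snoc_last, hu]
      abel
    · have h2 : ∑ j, (if k = Fin.last m then tt j else 0) •
          (Fin.snoc C q : Fin (m+1) → E d) j = 0 := by
        simp [if_neg hk]
      rw [h2, add_zero]
      obtain ⟨i, rfl⟩ := Fin.exists_castSucc_eq.mpr hk
      rw [Fin.snoc_castSucc, Fin.snoc_castSucc]
  have hgram : gram (Fin.snoc C u) = Em.transpose * gram (Fin.snoc C q) * Em := by
    rw [hrepr]; exact gram_transform _ _
  have hdetE : Em.det = 1 := by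
    have htri : Em.BlockTriangular id := by
      intro j k hlt
      have hne : j ≠ k := fun h => absurd (h ▸ hlt) (lt_irrefl _)
      have hkne : k ≠ Fin.last m := by
        intro h
        exact absurd (h ▸ hlt) (not_lt.mpr (Fin.le_last j))
      simp [hEm, if_neg hne, if_neg hkne]
    rw [Matrix.det_of_upperTriangular htri]
    refine Finset.prod_eq_one fun k _ => ?_
    rcases eq_or_ne k (Fin.last m) with rfl | hk
    · simp [hEm, htt, Fin.snoc_last]
    · simp [hEm, if_neg hk]
  have hdet1 : (gram (Fin.snoc C u)).det = (gram (Fin.snoc C q)).det := by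
    rw [hgram, Matrix.det_mul, Matrix.det_mul, Matrix.det_transpose, hdetE]
    ring
  rw [hdet1]
  rw [Matrix.det_succ_row (gram (Fin.snoc C q)) (Fin.last m)]
  rw [Finset.sum_eq_single (Fin.last m)]
  · have hsub : (gram (Fin.snoc C q)).submatrix (Fin.last m).succAbove (Fin.last m).succAbove
        = gram C := by
      ext i j
      simp [gram, Matrix.submatrix_apply, Fin.succAbove_last, Fin.snoc_castSucc]
    rw [hsub]
    have hqq : gram (Fin.snoc C q) (Fin.last m) (Fin.last m) = ‖q‖ ^ 2 := by
      simp only [gram, Matrix.of_apply, Fin.snoc_last]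
      exact real_inner_self_eq_norm_sq q
    rw [hqq]
    have hpow : ((-1 : ℝ)) ^ ((Fin.last m : ℕ) + (Fin.last m : ℕ)) = 1 :=
      Even.neg_one_pow ⟨(Fin.last m : ℕ), rfl⟩
    rw [hpow]
    ring
  · intro j _ hj
    obtain ⟨i, rfl⟩ := Fin.exists_castSucc_eq.mpr hj
    have : gram (Fin.snoc C q) (Fin.last m) i.castSucc = 0 := by
      simp only [gram, Matrix.of_apply, Fin.snoc_last, Fin.snoc_castSucc]
      exact hq i
    rw [this]
    ring
  · intro h
    exact absurd (Finset.mem_univ _) h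

end St6
namespace St6

lemma gramDet_eq {d n : ℕ} (B : Fin n → E d) : gramDet B = Real.sqrt ((gram B).det) := rfl

lemma mem_wperp {d : ℕ} {w x : E d} (h : ⟪w, x⟫ = 0) :
    x ∈ (Submodule.span ℝ ({w} : Set (E d)))ᗮ := by
  rw [Submodule.mem_orthogonal]
  intro v hv
  obtain ⟨s, rfl⟩ := Submodule.mem_span_singleton.mp hv
  rw [real_inner_smul_left, h, mul_zero]

lemma zspan_le_span {d n : ℕ} (B : Fin n → E d) : zspan B ⊆
    (Submodule.span ℝ (Set.range B) : Set (E d)) := by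
  intro x hx
  have := Submodule.subset_span (R := ℝ) hx
  rwa [span_zspan] at this

end St6

theorem stmt6 {d n : ℕ} (hn : 2 ≤ n) (L : Set (EuclideanSpace ℝ (Fin d)))
    (B : Fin n → EuclideanSpace ℝ (Fin d)) (hB : LinearIndependent ℝ B) (hL : L = zspan B)
    (w : EuclideanSpace ℝ (Fin d)) (hw0 : w ≠ 0) (hwdual : w ∈ dualSet L)
    (hwprim : {x | ∃ z : ℤ, x = (z : ℝ) • w} =
      dualSet L ∩ (Submodule.span ℝ ({w} : Set (EuclideanSpace ℝ (Fin d))) : Set (EuclideanSpace ℝ (Fin d))))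
    (γ₁ γ₂ : ℝ) (hγ₁ : 0 < γ₁) (hγ₂ : 0 < γ₂)
    (hwshort : ∀ D : Fin n → EuclideanSpace ℝ (Fin d), LinearIndependent ℝ D → dualSet L = zspan D →
      ‖w‖ ≤ γ₂ * gramDet D ^ ((1 : ℝ) / (n : ℝ)))
    (y : EuclideanSpace ℝ (Fin d)) (hy0 : y ≠ 0)
    (hyL : y ∈ L ∩ ((Submodule.span ℝ ({w} : Set (EuclideanSpace ℝ (Fin d))))ᗮ : Set (EuclideanSpace ℝ (Fin d))))
    (hrank : IsLattice (L ∩ ((Submodule.span ℝ ({w} : Set (EuclideanSpace ℝ (Fin d))))ᗮ : Set (EuclideanSpace ℝ (Fin d)))) (n - 1))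
    (hyshort : ∀ C : Fin (n - 1) → EuclideanSpace ℝ (Fin d), LinearIndependent ℝ C →
      L ∩ ((Submodule.span ℝ ({w} : Set (EuclideanSpace ℝ (Fin d))))ᗮ : Set (EuclideanSpace ℝ (Fin d))) = zspan C →
      ‖y‖ ≤ γ₁ * gramDet C ^ ((1 : ℝ) / ((n : ℝ) - 1))) :
    ‖y‖ ≤ γ₁ * γ₂ ^ ((1 : ℝ) / ((n : ℝ) - 1)) * gramDet B ^ ((1 : ℝ) / (n : ℝ)) := by
  subst hL
  obtain ⟨C, hC, hMC⟩ := hrank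
  set a : ℝ := (St6.gram B).det with ha_def
  have ha : 0 < a := St6.gram_det_pos hB
  -- dual vector facts
  have hwspan : w ∈ Submodule.span ℝ (Set.range B) := by
    have := hwdual.1
    rwa [St6.span_zspan] at this
  -- dual basis bound
  have hWineq : ‖w‖ ≤ γ₂ * Real.sqrt a⁻¹ ^ ((1 : ℝ) / (n : ℝ)) := by
    have h1 := hwshort (St6.dualBasis B) (St6.dualBasis_linearIndependent hB)
      (St6.dualSet_zspan hB)
    rwa [St6.gramDet_eq, St6.det_gram_dualBasis hB] at h1
  -- primitive vector gives u
  obtain ⟨u, huzs, huw⟩ := St6.exists_unit_inner hB hw0 hwdual hwprim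
  -- C is orthogonal to w
  have hCmem : ∀ i, C i ∈ zspan B ∩
      ((Submodule.span ℝ ({w} : Set (EuclideanSpace ℝ (Fin d))))ᗮ : Set (EuclideanSpace ℝ (Fin d))) :=
    fun i => hMC ▸ St6.self_mem_zspan C i
  have hCw : ∀ i, ⟪w, C i⟫ = 0 := by
    intro i
    exact (Submodule.mem_orthogonal _ _).mp (hCmem i).2 w (Submodule.mem_span_singleton_self w)
  -- snoc basis of L
  have hsnoc_li : LinearIndependent ℝ (Fin.snoc C u) := St6.snoc_linearIndependent hC hCw huw
  have hzspan_snoc : zspan B = zspan (Fin.snoc C u) := by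
    apply Set.Subset.antisymm
    · apply St6.zspan_subset_of_mem
      intro i
      obtain ⟨m, hm⟩ := hwdual.2 (B i) (St6.self_mem_zspan B i)
      have hx' : B i - (m : ℝ) • u ∈ zspan B := St6.sub_zsmul_mem_zspan m (St6.self_mem_zspan B i) huzs
      have hx'perp : B i - (m : ℝ) • u ∈
          ((Submodule.span ℝ ({w} : Set (EuclideanSpace ℝ (Fin d))))ᗮ : Set (EuclideanSpace ℝ (Fin d))) := by
        apply St6.mem_wperp
        rw [inner_sub_right, hm, real_inner_smul_right, huw, mul_one, sub_self]
      have hx'C : B i - (m : ℝ) • u ∈ zspan C := by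
        rw [← hMC]; exact ⟨hx', hx'perp⟩
      have hx'snoc : B i - (m : ℝ) • u ∈ zspan (Fin.snoc C u) := by
        apply St6.zspan_subset_of_mem (fun j => ?_) hx'C
        have : (Fin.snoc C u : Fin (n-1+1) → EuclideanSpace ℝ (Fin d)) j.castSucc = C j := by
          simp
        exact Set.mem_of_eq_of_mem this.symm (St6.self_mem_zspan _ _)
      have husnoc : u ∈ zspan (Fin.snoc C u) := by
        have : (Fin.snoc C u : Fin (n-1+1) → EuclideanSpace ℝ (Fin d)) (Fin.last (n-1)) = u := by
          simp
        exact Set.mem_of_eq_of_mem this.symm (St6.self_mem_zspan _ _)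
      have := St6.sub_zsmul_mem_zspan (-m) hx'snoc husnoc
      have heq : B i - (m : ℝ) • u - ((-m : ℤ) : ℝ) • u = B i := by
        push_cast
        rw [neg_smul, sub_neg_eq_add, sub_add_cancel]
      rwa [heq] at this
    · apply St6.zspan_subset_of_mem
      intro j
      rcases eq_or_ne j (Fin.last (n-1)) with rfl | hj
      · rwa [Fin.snoc_last]
      · obtain ⟨i, rfl⟩ := Fin.exists_castSucc_eq.mpr hj
        rw [Fin.snoc_castSucc]
        exact (hCmem i).1
  have hn1 : n - 1 + 1 = n := by omega
  have hdet_snoc : (St6.gram (Fin.snoc C u)).det = a := by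
    have h1 : zspan ((Fin.snoc C u) ∘ (finCongr hn1.symm)) = zspan (Fin.snoc C u) :=
      St6.zspan_comp_equiv _ (finCongr hn1.symm)
    have h2 := St6.det_gram_comp_equiv (Fin.snoc C u) (finCongr hn1.symm)
    have h3 := St6.det_gram_eq_of_zspan_eq hB (B' := (Fin.snoc C u) ∘ (finCongr hn1.symm))
      (by rw [h1, ← hzspan_snoc])
    rw [← h2, ← h3]
  -- orthogonal decomposition of u
  set VC : Submodule ℝ (EuclideanSpace ℝ (Fin d)) := Submodule.span ℝ (Set.range C) with hVC_def
  set p : EuclideanSpace ℝ (Fin d) := (Submodule.orthogonalProjectionOnto VC u : EuclideanSpace ℝ (Fin d)) with hp_def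
  set q : EuclideanSpace ℝ (Fin d) := u - p with hq_def
  have hqperp : q ∈ VCᗮ := Submodule.sub_starProjection_mem_orthogonal (K := VC) u
  have hq : ∀ i, ⟪q, C i⟫ = 0 := by
    intro i
    rw [real_inner_comm]
    exact (Submodule.mem_orthogonal VC q).mp hqperp (C i) (Submodule.subset_span ⟨i, rfl⟩)
  have hpVC : p ∈ VC := SetLike.coe_mem _
  obtain ⟨t, ht⟩ := (Submodule.mem_span_range_iff_exists_fun ℝ).mp hpVC
  have hu_decomp : u = (∑ i, t i • C i) + q := by
    rw [ht, hq_def]; abel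
  have hdet_formula : (St6.gram (Fin.snoc C u)).det = (St6.gram C).det * ‖q‖ ^ 2 :=
    St6.det_gram_snoc C u q t hq hu_decomp
  -- compute ‖q‖
  have hwq : ⟪w, q⟫ = 1 := by
    have hwp : ⟪w, p⟫ = 0 := by
      rw [← ht, inner_sum]
      refine Finset.sum_eq_zero fun i _ => ?_
      rw [real_inner_smul_right, hCw i, mul_zero]
    rw [hq_def, inner_sub_right, huw, hwp, sub_zero]
  have hww : (0:ℝ) < ‖w‖ := norm_pos_iff.mpr hw0
  have hVC_eq : VC = Submodule.span ℝ (Set.range B) ⊓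
      (Submodule.span ℝ ({w} : Set (EuclideanSpace ℝ (Fin d))))ᗮ := by
    have hle : VC ≤ Submodule.span ℝ (Set.range B) ⊓
        (Submodule.span ℝ ({w} : Set (EuclideanSpace ℝ (Fin d))))ᗮ := by
      rw [hVC_def, Submodule.span_le]
      rintro x ⟨i, rfl⟩
      exact ⟨St6.zspan_le_span B (hCmem i).1, (hCmem i).2⟩
    have hfinC : Module.finrank ℝ VC = n - 1 := by
      rw [hVC_def, finrank_span_eq_card hC, Fintype.card_fin]
    have hfinB : Module.finrank ℝ (Submodule.span ℝ (Set.range B)) = n := by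
      rw [finrank_span_eq_card hB, Fintype.card_fin]
    have hwnotin : w ∉ Submodule.span ℝ (Set.range B) ⊓
        (Submodule.span ℝ ({w} : Set (EuclideanSpace ℝ (Fin d))))ᗮ := by
      intro h
      have := (Submodule.mem_orthogonal _ _).mp h.2 w (Submodule.mem_span_singleton_self w)
      exact hw0 (inner_self_eq_zero.mp this)
    have hlt : Submodule.span ℝ (Set.range B) ⊓
        (Submodule.span ℝ ({w} : Set (EuclideanSpace ℝ (Fin d))))ᗮ <
        Submodule.span ℝ (Set.range B) :=
      lt_of_le_of_ne inf_le_left (fun h => hwnotin (h.symm ▸ hwspan))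
    have hfinlt := Submodule.finrank_lt_finrank_of_lt hlt
    rw [hfinB] at hfinlt
    exact Submodule.eq_of_le_of_finrank_le hle (by rw [hfinC]; omega)
  have hww2 : (‖w‖ ^ 2 : ℝ) ≠ 0 := pow_ne_zero _ hww.ne'
  have hq_norm : ‖q‖ ^ 2 = (‖w‖ ^ 2)⁻¹ := by
    set r : EuclideanSpace ℝ (Fin d) := q - (‖w‖ ^ 2)⁻¹ • w with hr_def
    have hp_span : p ∈ Submodule.span ℝ (Set.range B) := by
      have := hpVC
      rw [hVC_eq] at this
      exact this.1
    have hq_spanB : q ∈ Submodule.span ℝ (Set.range B) :=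
      Submodule.sub_mem _ (St6.zspan_le_span B huzs) hp_span
    have hr_span : r ∈ Submodule.span ℝ (Set.range B) :=
      Submodule.sub_mem _ hq_spanB (Submodule.smul_mem _ _ hwspan)
    have hr_perp : ⟪w, r⟫ = 0 := by
      rw [hr_def, inner_sub_right, hwq, real_inner_smul_right,
        real_inner_self_eq_norm_sq, inv_mul_cancel₀ hww2, sub_self]
    have hr_VC : r ∈ VC := by
      rw [hVC_eq]
      exact Submodule.mem_inf.mpr ⟨hr_span, St6.mem_wperp hr_perp⟩
    have hqr : ⟪r, q⟫ = 0 := (Submodule.mem_orthogonal VC q).mp hqperp r hr_VC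
    rw [hr_def, inner_sub_left, real_inner_smul_left, hwq,
      real_inner_self_eq_norm_sq, mul_one] at hqr
    linarith
  -- final computation
  have hgramC : (St6.gram C).det = a * ‖w‖ ^ 2 := by
    rw [hdet_snoc, hq_norm] at hdet_formula
    field_simp at hdet_formula
    linarith
  have hyineq := hyshort C hC hMC
  rw [St6.gramDet_eq, hgramC] at hyineq
  have hs : 0 < Real.sqrt a := Real.sqrt_pos.mpr ha
  have hsqrtC : Real.sqrt (a * ‖w‖ ^ 2) = Real.sqrt a * ‖w‖ := by
    rw [Real.sqrt_mul ha.le, Real.sqrt_sq (norm_nonneg w)]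
  rw [hsqrtC] at hyineq
  rw [Real.sqrt_inv] at hWineq
  set s : ℝ := Real.sqrt a with hs_def
  set e1 : ℝ := (1 : ℝ) / ((n : ℝ) - 1) with he1_def
  set e2 : ℝ := (1 : ℝ) / (n : ℝ) with he2_def
  have hnR : (2 : ℝ) ≤ (n : ℝ) := by exact_mod_cast hn
  have hn0 : (n : ℝ) ≠ 0 := by linarith
  have hn1' : (n : ℝ) - 1 ≠ 0 := by linarith
  have he1 : (0 : ℝ) ≤ e1 := le_of_lt (div_pos one_pos (by linarith))
  have h1 : (s * ‖w‖) ^ e1 ≤ (s * (γ₂ * s⁻¹ ^ e2)) ^ e1 :=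
    Real.rpow_le_rpow (by positivity) (mul_le_mul_of_nonneg_left hWineq hs.le) he1
  have h2 : s * (γ₂ * s⁻¹ ^ e2) = γ₂ * s ^ ((1 : ℝ) - e2) := by
    rw [Real.inv_rpow hs.le, Real.rpow_sub hs, Real.rpow_one]
    field_simp
  have h3 : (γ₂ * s ^ ((1 : ℝ) - e2)) ^ e1 = γ₂ ^ e1 * s ^ e2 := by
    have hexp : ((1 : ℝ) - e2) * e1 = e2 := by
      rw [he1_def, he2_def]
      field_simp
    rw [Real.mul_rpow hγ₂.le (Real.rpow_nonneg hs.le _), ← Real.rpow_mul hs.le, hexp]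
  have hgoal : gramDet B = s := by
    rw [St6.gramDet_eq, ← ha_def]
  rw [hgoal]
  calc ‖y‖ ≤ γ₁ * ((s * ‖w‖) ^ e1) := hyineq
    _ ≤ γ₁ * ((s * (γ₂ * s⁻¹ ^ e2)) ^ e1) := mul_le_mul_of_nonneg_left h1 hγ₁.le
    _ = γ₁ * (γ₂ ^ e1 * s ^ e2) := by rw [h2, h3]
    _ = γ₁ * γ₂ ^ e1 * s ^ e2 := by ring
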